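/- Let V be a finite vertex set partitioned into two communities V¹ and V², let 0 < b_n < a_n < 1, and let G = (V, E) be a simple graph on V with adjacency matrix A. For a configuration σ: V → {-1,1} define the SBM likelihood p_G(σ) := ∏_{u<v} [ a_n^{A_{uv}} (1-a_n)^{1-A_{uv}} 𝟙{σ(u)=σ(v)} + b_n^{A_{uv}} (1-b_n)^{1-A_{uv}} 𝟙{σ(u)≠σ(v)} ], and let ρ_n := [log(1-a_n) - log(1-b_n)] / [log(b_n(1-a_n)) - log(a_n(1-b_n))]. Then the set of configurations maximizing σ ↦ p_G(σ) equals the set of configurations minimizing σ ↦ -(1/2) Σ_{(u,v): u∼v} σ(u)σ(v) + (ρ_n/2) (Σ_{u∈V} σ(u))², where the first sum ranges over ordered pairs of adjacent vertices (so each edge is counted twice). -/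

import Mathlib

open Finset

private lemma sym_sum_aux {N : ℕ} (f : Fin N → Fin N → ℝ) (hf : ∀ u v, f u v = f v u) :
    ∑ u : Fin N, ∑ v : Fin N, f u v
      = (∑ u : Fin N, f u u)
        + 2 * ∑ u : Fin N, ∑ v ∈ Finset.univ.filter (fun v => u < v), f u v := by
  have key : ∀ u v : Fin N, f u v
      = (if u = v then f u v else 0)
        + ((if u < v then f u v else 0) + (if v < u then f u v else 0)) := by
    intro u v
    rcases lt_trichotomy u v with h | h | h
    · simp [h, h.ne, not_lt_of_gt h]
    · simp [h]
    · simp [h, h.ne', not_lt_of_gt h]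
  have hsplit : ∑ u : Fin N, ∑ v : Fin N, f u v
      = (∑ u : Fin N, ∑ v : Fin N, if u = v then f u v else 0)
        + ((∑ u : Fin N, ∑ v : Fin N, if u < v then f u v else 0)
          + (∑ u : Fin N, ∑ v : Fin N, if v < u then f u v else 0)) := by
    rw [← Finset.sum_add_distrib, ← Finset.sum_add_distrib]
    refine Finset.sum_congr rfl fun u _ => ?_
    rw [← Finset.sum_add_distrib, ← Finset.sum_add_distrib]
    exact Finset.sum_congr rfl fun v _ => key u v
  have h1 : (∑ u : Fin N, ∑ v : Fin N, if u = v then f u v else 0) = ∑ u : Fin N, f u u := by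
    refine Finset.sum_congr rfl fun u _ => ?_
    simp
  have h2 : (∑ u : Fin N, ∑ v : Fin N, if u < v then f u v else 0)
      = ∑ u : Fin N, ∑ v ∈ Finset.univ.filter (fun v => u < v), f u v := by
    refine Finset.sum_congr rfl fun u _ => ?_
    rw [Finset.sum_filter]
  have h3 : (∑ u : Fin N, ∑ v : Fin N, if v < u then f u v else 0)
      = ∑ u : Fin N, ∑ v ∈ Finset.univ.filter (fun v => u < v), f u v := by
    rw [Finset.sum_comm]
    refine Finset.sum_congr rfl fun u _ => ?_
    rw [Finset.sum_filter]
    exact Finset.sum_congr rfl fun v _ => by rw [hf]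
  rw [hsplit, h1, h2, h3]; ring

/-- The maximizers of the SBM likelihood `p_G` among spin configurations
are exactly the minimizers of
`σ ↦ -(1/2) Σ_{(u,v): u∼v} σ(u)σ(v) + (ρ_n/2)(Σ_u σ(u))²`
(the first sum ranging over ordered pairs of adjacent vertices). -/
theorem mle_equals_ising_minimizer
    {N : ℕ} (G : SimpleGraph (Fin N)) [DecidableRel G.Adj]
    (an bn : ℝ) (hbn : 0 < bn) (hba : bn < an) (han : an < 1)
    (A : Fin N → Fin N → ℕ)
    (hA : ∀ u v : Fin N, A u v = if G.Adj u v then 1 else 0)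
    (pG : (Fin N → ℝ) → ℝ)
    (hpG : ∀ σ : Fin N → ℝ,
      pG σ = ∏ u : Fin N, ∏ v ∈ Finset.univ.filter fun v => u < v,
        (an ^ A u v * (1 - an) ^ (1 - A u v) * (if σ u = σ v then 1 else 0)
          + bn ^ A u v * (1 - bn) ^ (1 - A u v) * (if σ u = σ v then 0 else 1)))
    (ρn : ℝ)
    (hρn : ρn = (Real.log (1 - an) - Real.log (1 - bn))
        / (Real.log (bn * (1 - an)) - Real.log (an * (1 - bn))))
    (F : (Fin N → ℝ) → ℝ)
    (hF : ∀ σ : Fin N → ℝ,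
      F σ = -(1 / 2) * (∑ u : Fin N, ∑ v ∈ G.neighborFinset u, σ u * σ v)
        + ρn / 2 * (∑ u : Fin N, σ u) ^ 2)
    (σ : Fin N → ℝ) (hσ : ∀ w : Fin N, σ w = 1 ∨ σ w = -1) :
    (∀ τ : Fin N → ℝ, (∀ w : Fin N, τ w = 1 ∨ τ w = -1) → pG τ ≤ pG σ)
      ↔ (∀ τ : Fin N → ℝ, (∀ w : Fin N, τ w = 1 ∨ τ w = -1) → F σ ≤ F τ) := by
  have ha0 : 0 < an := hbn.trans hba
  have h1a : 0 < 1 - an := by linarith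
  have h1b : 0 < 1 - bn := by linarith
  set α : ℝ := (Real.log an - Real.log bn) + (Real.log (1 - bn) - Real.log (1 - an))
    with hαdef
  set β : ℝ := Real.log (1 - an) - Real.log (1 - bn) with hβdef
  have hαpos : 0 < α := by
    rw [hαdef]
    have l1 : Real.log bn < Real.log an := Real.log_lt_log hbn hba
    have l2 : Real.log (1 - an) < Real.log (1 - bn) := Real.log_lt_log h1a (by linarith)
    linarith
  have hαρ : α * ρn = -β := by
    rw [hρn, Real.log_mul hbn.ne' h1a.ne', Real.log_mul ha0.ne' h1b.ne']
    have hden : Real.log bn + Real.log (1 - an) - (Real.log an + Real.log (1 - bn)) = -α := by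
      rw [hαdef]; ring
    rw [hden, hβdef, div_neg, mul_neg]
    congr 1
    rw [mul_comm, div_mul_cancel₀ _ hαpos.ne']
  -- per-pair factor in exponential form
  have factor : ∀ (τ : Fin N → ℝ), (∀ w : Fin N, τ w = 1 ∨ τ w = -1) → ∀ u v : Fin N,
      (an ^ A u v * (1 - an) ^ (1 - A u v) * (if τ u = τ v then 1 else 0)
          + bn ^ A u v * (1 - bn) ^ (1 - A u v) * (if τ u = τ v then 0 else 1))
      = Real.exp ((1 + τ u * τ v) / 2 * (if G.Adj u v then Real.log an else Real.log (1 - an))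
          + (1 - τ u * τ v) / 2 * (if G.Adj u v then Real.log bn else Real.log (1 - bn))) := by
    intro τ hτ u v
    rw [hA]
    rcases hτ u with h1 | h1 <;> rcases hτ v with h2 | h2 <;> by_cases hadj : G.Adj u v <;>
      simp [h1, h2, hadj] <;> norm_num <;>
      first
        | exact (Real.exp_log ha0).symm
        | exact (Real.exp_log hbn).symm
        | exact (Real.exp_log h1a).symm
        | exact (Real.exp_log h1b).symm
  set C0 : ℝ := ∑ u : Fin N, ∑ v ∈ Finset.univ.filter (fun v => u < v),
      (((if G.Adj u v then Real.log an else Real.log (1 - an))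
        + (if G.Adj u v then Real.log bn else Real.log (1 - bn))) / 2) with hC0
  set C : ℝ := C0 - β * N / 4 with hC
  have master : ∀ (τ : Fin N → ℝ), (∀ w : Fin N, τ w = 1 ∨ τ w = -1) →
      pG τ = Real.exp (C - α / 2 * F τ) := by
    intro τ hτ
    set Sall : ℝ := ∑ u : Fin N, ∑ v ∈ Finset.univ.filter (fun v => u < v), τ u * τ v
      with hSall
    set SE : ℝ := ∑ u : Fin N, ∑ v ∈ Finset.univ.filter (fun v => u < v),
      (if G.Adj u v then τ u * τ v else 0) with hSE
    -- square of sum identity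
    have hdiag1 : (∑ u : Fin N, τ u * τ u) = (N : ℝ) := by
      have : ∀ u : Fin N, τ u * τ u = 1 := by
        intro u; rcases hτ u with h | h <;> rw [h] <;> norm_num
      rw [Finset.sum_congr rfl fun u _ => this u]
      simp
    have hsq : (∑ u : Fin N, τ u) ^ 2 = (N : ℝ) + 2 * Sall := by
      have hs := sym_sum_aux (fun u v => τ u * τ v) (fun u v => mul_comm _ _)
      have hLHS : (∑ u : Fin N, ∑ v : Fin N, τ u * τ v) = (∑ u : Fin N, τ u) ^ 2 := by
        rw [sq, Finset.sum_mul_sum]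
      rw [← hLHS, hs, hdiag1]
    -- neighbor sum identity
    have hT : (∑ u : Fin N, ∑ v ∈ G.neighborFinset u, τ u * τ v) = 2 * SE := by
      have hsymg : ∀ u v : Fin N,
          (if G.Adj u v then τ u * τ v else 0) = (if G.Adj v u then τ v * τ u else 0) := by
        intro u v
        by_cases h : G.Adj u v
        · simp [h, h.symm, mul_comm]
        · have h' : ¬ G.Adj v u := fun hh => h hh.symm
          simp [h, h']
      have hs := sym_sum_aux (fun u v => if G.Adj u v then τ u * τ v else 0) hsymg
      have hdiag0 : (∑ u : Fin N, if G.Adj u u then τ u * τ u else 0) = 0 := by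
        simp
      have hLHS : (∑ u : Fin N, ∑ v : Fin N, if G.Adj u v then τ u * τ v else 0)
          = ∑ u : Fin N, ∑ v ∈ G.neighborFinset u, τ u * τ v := by
        refine Finset.sum_congr rfl fun u _ => ?_
        rw [SimpleGraph.neighborFinset_eq_filter, Finset.sum_filter]
      rw [← hLHS, hs, hdiag0, zero_add]
    -- compute pG τ
    rw [hpG, hF]
    have hstep1 : (∏ u : Fin N, ∏ v ∈ Finset.univ.filter fun v => u < v,
        (an ^ A u v * (1 - an) ^ (1 - A u v) * (if τ u = τ v then 1 else 0)
          + bn ^ A u v * (1 - bn) ^ (1 - A u v) * (if τ u = τ v then 0 else 1)))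
        = Real.exp (∑ u : Fin N, ∑ v ∈ Finset.univ.filter (fun v => u < v),
            ((1 + τ u * τ v) / 2 * (if G.Adj u v then Real.log an else Real.log (1 - an))
              + (1 - τ u * τ v) / 2 * (if G.Adj u v then Real.log bn else Real.log (1 - bn)))) := by
      rw [Real.exp_sum]
      refine Finset.prod_congr rfl fun u _ => ?_
      rw [Real.exp_sum]
      exact Finset.prod_congr rfl fun v _ => factor τ hτ u v
    rw [hstep1]
    congr 1
    -- rewrite each summand
    have hterm : ∀ u v : Fin N,
        (1 + τ u * τ v) / 2 * (if G.Adj u v then Real.log an else Real.log (1 - an))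
          + (1 - τ u * τ v) / 2 * (if G.Adj u v then Real.log bn else Real.log (1 - bn))
        = (((if G.Adj u v then Real.log an else Real.log (1 - an))
            + (if G.Adj u v then Real.log bn else Real.log (1 - bn))) / 2)
          + β / 2 * (τ u * τ v) + α / 2 * (if G.Adj u v then τ u * τ v else 0) := by
      intro u v
      by_cases h : G.Adj u v <;> simp only [h, if_true, if_false] <;>
        rw [hαdef, hβdef] <;> ring
    have hsum : (∑ u : Fin N, ∑ v ∈ Finset.univ.filter (fun v => u < v),
        ((1 + τ u * τ v) / 2 * (if G.Adj u v then Real.log an else Real.log (1 - an))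
          + (1 - τ u * τ v) / 2 * (if G.Adj u v then Real.log bn else Real.log (1 - bn))))
        = C0 + β / 2 * Sall + α / 2 * SE := by
      rw [hC0, hSall, hSE, Finset.mul_sum, Finset.mul_sum, ← Finset.sum_add_distrib,
        ← Finset.sum_add_distrib]
      refine Finset.sum_congr rfl fun u _ => ?_
      rw [Finset.mul_sum, Finset.mul_sum, ← Finset.sum_add_distrib, ← Finset.sum_add_distrib]
      exact Finset.sum_congr rfl fun v _ => hterm u v
    rw [hsum, hC, hsq, hT]
    linear_combination (((N : ℝ) + 2 * Sall) / 4) * hαρ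
  -- conclude
  constructor
  · intro h τ hτ
    have h1 := h τ hτ
    rw [master τ hτ, master σ hσ] at h1
    have h2 := Real.exp_le_exp.mp h1
    have h3 : α / 2 * F σ ≤ α / 2 * F τ := by linarith
    have hhalf : 0 < α / 2 := by linarith
    exact (mul_le_mul_iff_right₀ hhalf).mp h3
  · intro h τ hτ
    rw [master τ hτ, master σ hσ]
    apply Real.exp_le_exp.mpr
    have h1 := h τ hτ
    have hhalf : 0 < α / 2 := by linarith
    nlinarith
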